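/- Let S and A be finite sets, let π be a policy, let T^o be a transition kernel, let μ be an initial distribution on S, and let γ ∈ [0,1). For every transition kernel T satisfying D_TV(T(·|s,a), T^o(·|s,a)) ≤ ε' for all (s,a) ∈ S × A, the discounted state–action occupancy measures ρ^π_T(s,a) := π(a|s)·ρ^π_T(s) and ρ^π_{T^o}(s,a) := π(a|s)·ρ^π_{T^o}(s) satisfy D_TV(ρ^π_T(·,·), ρ^π_{T^o}(·,·)) ≤ γ·ε'/(1 − γ). -/

import Mathlib

open Finset

/-- Policy-averaged transition matrix `P(s,s') = ∑ₐ π(a|s) T(s'|s,a)`. -/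
noncomputable def Pmat {S A : Type*} [Fintype A] (π : S → A → ℝ) (T : S → A → S → ℝ) :
    Matrix S S ℝ :=
  Matrix.of fun s s' => ∑ a, π s a * T s a s'

/-- Discounted state-occupancy measure
`ρ^π_T(s) = (1-γ) ∑ₜ γ^t (μ P^t)(s)`. -/
noncomputable def occ {S A : Type*} [Fintype S] [DecidableEq S] [Fintype A]
    (π : S → A → ℝ) (T : S → A → S → ℝ) (μ : S → ℝ) (γ : ℝ) (s : S) : ℝ :=
  (1 - γ) * ∑' t : ℕ, γ ^ t * Matrix.vecMul μ (Pmat π T ^ t) s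

section helpers
variable {S A : Type*} [Fintype S] [DecidableEq S] [Fintype A]

lemma Pmat_nonneg {π : S → A → ℝ} {T : S → A → S → ℝ}
    (hπ0 : ∀ s a, 0 ≤ π s a) (hT0 : ∀ s a s', 0 ≤ T s a s') (s s' : S) :
    0 ≤ Pmat π T s s' :=
  Finset.sum_nonneg fun a _ => mul_nonneg (hπ0 s a) (hT0 s a s')

lemma Pmat_row_sum {π : S → A → ℝ} {T : S → A → S → ℝ}
    (hπ1 : ∀ s, ∑ a, π s a = 1) (hT1 : ∀ s a, ∑ s', T s a s' = 1) (s : S) :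
    ∑ s', Pmat π T s s' = 1 := by
  simp only [Pmat, Matrix.of_apply]
  rw [Finset.sum_comm]
  simp_rw [← Finset.mul_sum, hT1, mul_one]
  exact hπ1 s

lemma vecMul_prob {μ : S → ℝ} {M : Matrix S S ℝ} (hμ0 : ∀ s, 0 ≤ μ s) (hμ1 : ∑ s, μ s = 1)
    (hM0 : ∀ s s', 0 ≤ M s s') (hM1 : ∀ s, ∑ s', M s s' = 1) :
    (∀ s, 0 ≤ Matrix.vecMul μ M s) ∧ (∑ s, Matrix.vecMul μ M s = 1) := by
  constructor
  · intro s'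
    simp only [Matrix.vecMul, dotProduct]
    exact Finset.sum_nonneg fun s _ => mul_nonneg (hμ0 s) (hM0 s s')
  · simp only [Matrix.vecMul, dotProduct]
    rw [Finset.sum_comm]
    simp_rw [← Finset.mul_sum, hM1, mul_one]
    exact hμ1

lemma pow_prob {μ : S → ℝ} {M : Matrix S S ℝ} (hμ0 : ∀ s, 0 ≤ μ s) (hμ1 : ∑ s, μ s = 1)
    (hM0 : ∀ s s', 0 ≤ M s s') (hM1 : ∀ s, ∑ s', M s s' = 1) :
    ∀ t : ℕ, (∀ s, 0 ≤ Matrix.vecMul μ (M ^ t) s) ∧ (∑ s, Matrix.vecMul μ (M ^ t) s = 1) := by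
  intro t
  induction t with
  | zero => simpa [Matrix.vecMul_one] using ⟨hμ0, hμ1⟩
  | succ t ih =>
    have h := vecMul_prob ih.1 ih.2 hM0 hM1
    rw [pow_succ]
    simpa [← Matrix.vecMul_vecMul] using h

lemma l1_vecMul_le (u : S → ℝ) (N : Matrix S S ℝ) :
    ∑ s', |Matrix.vecMul u N s'| ≤ ∑ s, |u s| * ∑ s', |N s s'| := by
  calc ∑ s', |Matrix.vecMul u N s'| ≤ ∑ s', ∑ s, |u s| * |N s s'| := by
        refine Finset.sum_le_sum fun s' _ => ?_
        simp only [Matrix.vecMul, dotProduct]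
        exact (Finset.abs_sum_le_sum_abs _ _).trans (le_of_eq (by simp [abs_mul]))
    _ = ∑ s, |u s| * ∑ s', |N s s'| := by
        rw [Finset.sum_comm]; simp_rw [Finset.mul_sum]

end helpers

section main
variable {S A : Type*} [Fintype S] [DecidableEq S] [Fintype A]
set_option linter.unusedSectionVars false

lemma row_diff_le {π : S → A → ℝ} {T To : S → A → S → ℝ} {ε' : ℝ}
    (hπ0 : ∀ s a, 0 ≤ π s a) (hπ1 : ∀ s, ∑ a, π s a = 1)
    (hTV : ∀ s a, (1/2) * ∑ s', |T s a s' - To s a s'| ≤ ε') (s : S) :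
    ∑ s', |Pmat π T s s' - Pmat π To s s'| ≤ 2 * ε' := by
  have h1 : ∑ s', |Pmat π T s s' - Pmat π To s s'|
      ≤ ∑ s', ∑ a, π s a * |T s a s' - To s a s'| := by
    refine Finset.sum_le_sum fun s' _ => ?_
    simp only [Pmat, Matrix.of_apply, ← Finset.sum_sub_distrib, ← mul_sub]
    refine (Finset.abs_sum_le_sum_abs _ _).trans (Finset.sum_le_sum fun a _ => ?_)
    rw [abs_mul, abs_of_nonneg (hπ0 s a)]
  refine h1.trans ?_
  rw [Finset.sum_comm]
  simp_rw [← Finset.mul_sum]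
  calc ∑ a, π s a * ∑ s', |T s a s' - To s a s'| ≤ ∑ a, π s a * (2 * ε') := by
        refine Finset.sum_le_sum fun a _ => mul_le_mul_of_nonneg_left ?_ (hπ0 s a)
        linarith [hTV s a]
    _ = 2 * ε' := by rw [← Finset.sum_mul, hπ1, one_mul]

lemma d_bound {π : S → A → ℝ} {T To : S → A → S → ℝ} {μ : S → ℝ} {ε' : ℝ}
    (hπ0 : ∀ s a, 0 ≤ π s a) (hπ1 : ∀ s, ∑ a, π s a = 1)
    (hTo0 : ∀ s a s', 0 ≤ To s a s') (hTo1 : ∀ s a, ∑ s', To s a s' = 1)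
    (hμ0 : ∀ s, 0 ≤ μ s) (hμ1 : ∑ s, μ s = 1)
    (hT0 : ∀ s a s', 0 ≤ T s a s') (hT1 : ∀ s a, ∑ s', T s a s' = 1)
    (hTV : ∀ s a, (1/2) * ∑ s', |T s a s' - To s a s'| ≤ ε') (t : ℕ) :
    ∑ s, |Matrix.vecMul μ (Pmat π T ^ t) s - Matrix.vecMul μ (Pmat π To ^ t) s|
      ≤ 2 * ε' * t := by
  have hP0 := Pmat_nonneg hπ0 hT0
  have hP1 := Pmat_row_sum hπ1 hT1
  have hPo0 := Pmat_nonneg hπ0 hTo0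
  have hPo1 := Pmat_row_sum hπ1 hTo1
  induction t with
  | zero => simp
  | succ t ih =>
    set v := Matrix.vecMul μ (Pmat π T ^ t) with hv
    set w := Matrix.vecMul μ (Pmat π To ^ t) with hw
    have hwprob := pow_prob hμ0 hμ1 hPo0 hPo1 t
    have hdecomp : ∀ s, Matrix.vecMul μ (Pmat π T ^ (t+1)) s -
        Matrix.vecMul μ (Pmat π To ^ (t+1)) s
        = Matrix.vecMul (v - w) (Pmat π T) s
          + Matrix.vecMul w (Pmat π T - Pmat π To) s := by
      intro s
      rw [pow_succ, pow_succ, ← Matrix.vecMul_vecMul, ← Matrix.vecMul_vecMul,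
        Matrix.sub_vecMul, Matrix.vecMul_sub]
      simp [v, w]
    have step1 : ∑ s, |Matrix.vecMul μ (Pmat π T ^ (t+1)) s -
        Matrix.vecMul μ (Pmat π To ^ (t+1)) s|
        ≤ ∑ s, |Matrix.vecMul (v - w) (Pmat π T) s|
          + ∑ s, |Matrix.vecMul w (Pmat π T - Pmat π To) s| := by
      rw [← Finset.sum_add_distrib]
      exact Finset.sum_le_sum fun s _ => by rw [hdecomp s]; exact abs_add_le _ _
    have b1 : ∑ s, |Matrix.vecMul (v - w) (Pmat π T) s| ≤ ∑ s, |v s - w s| := by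
      refine (l1_vecMul_le _ _).trans (le_of_eq ?_)
      refine Finset.sum_congr rfl fun s _ => ?_
      rw [show ∑ s', |Pmat π T s s'| = 1 by
        simp_rw [fun s' => abs_of_nonneg (hP0 s s')]; exact hP1 s]
      simp [Pi.sub_apply]
    have b2 : ∑ s, |Matrix.vecMul w (Pmat π T - Pmat π To) s| ≤ 2 * ε' := by
      refine (l1_vecMul_le _ _).trans ?_
      calc ∑ s, |w s| * ∑ s', |(Pmat π T - Pmat π To) s s'|
          ≤ ∑ s, |w s| * (2 * ε') := by
            refine Finset.sum_le_sum fun s _ => mul_le_mul_of_nonneg_left ?_ (abs_nonneg _)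
            simpa [Matrix.sub_apply] using row_diff_le hπ0 hπ1 hTV s
        _ = 2 * ε' := by
            rw [← Finset.sum_mul]
            rw [show ∑ s, |w s| = 1 from by
              exact (Finset.sum_congr rfl fun s _ => abs_of_nonneg (hwprob.1 s)).trans hwprob.2]
            rw [one_mul]
    calc _ ≤ _ := step1
      _ ≤ 2 * ε' * t + 2 * ε' := add_le_add (b1.trans ih) b2
      _ = 2 * ε' * (t + 1 : ℕ) := by push_cast; ring

end main

/-- TV bound between discounted state–action occupancy measures
`ρ^π_T(s,a) = π(a|s) ρ^π_T(s)` under perturbed transition kernels. -/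
theorem stmt4 {S A : Type*} [Fintype S] [DecidableEq S] [Fintype A]
    (π : S → A → ℝ) (hπ0 : ∀ s a, 0 ≤ π s a) (hπ1 : ∀ s, ∑ a, π s a = 1)
    (To : S → A → S → ℝ) (hTo0 : ∀ s a s', 0 ≤ To s a s')
    (hTo1 : ∀ s a, ∑ s', To s a s' = 1)
    (μ : S → ℝ) (hμ0 : ∀ s, 0 ≤ μ s) (hμ1 : ∑ s, μ s = 1)
    (γ : ℝ) (hγ0 : 0 ≤ γ) (hγ1 : γ < 1) (ε' : ℝ)
    (T : S → A → S → ℝ) (hT0 : ∀ s a s', 0 ≤ T s a s')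
    (hT1 : ∀ s a, ∑ s', T s a s' = 1)
    (hTV : ∀ s a, (1/2) * ∑ s', |T s a s' - To s a s'| ≤ ε') :
    (1/2) * ∑ p : S × A,
        |π p.1 p.2 * occ π T μ γ p.1 - π p.1 p.2 * occ π To μ γ p.1| ≤
      γ * ε' / (1 - γ) := by
  have hP0 := Pmat_nonneg hπ0 hT0
  have hP1 := Pmat_row_sum hπ1 hT1
  have hPo0 := Pmat_nonneg hπ0 hTo0
  have hPo1 := Pmat_row_sum hπ1 hTo1
  have hvprob := pow_prob hμ0 hμ1 hP0 hP1
  have hwprob := pow_prob hμ0 hμ1 hPo0 hPo1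
  set v : ℕ → S → ℝ := fun t => Matrix.vecMul μ (Pmat π T ^ t) with hv
  set w : ℕ → S → ℝ := fun t => Matrix.vecMul μ (Pmat π To ^ t) with hw
  have hγ' : (0:ℝ) < 1 - γ := by linarith
  have hγabs : ‖γ‖ < 1 := by rw [Real.norm_eq_abs, abs_of_nonneg hγ0]; exact hγ1
  have hvle : ∀ t s, v t s ≤ 1 := fun t s => by
    rw [← (hvprob t).2]
    exact Finset.single_le_sum (fun i _ => (hvprob t).1 i) (Finset.mem_univ s)
  have hwle : ∀ t s, w t s ≤ 1 := fun t s => by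
    rw [← (hwprob t).2]
    exact Finset.single_le_sum (fun i _ => (hwprob t).1 i) (Finset.mem_univ s)
  have hgeo : Summable (fun t : ℕ => γ ^ t) := summable_geometric_of_lt_one hγ0 hγ1
  have hsum1 : ∀ s, Summable (fun t : ℕ => γ ^ t * v t s) := fun s =>
    Summable.of_nonneg_of_le (fun t => mul_nonneg (pow_nonneg hγ0 t) ((hvprob t).1 s))
      (fun t => mul_le_of_le_one_right (pow_nonneg hγ0 t) (hvle t s)) hgeo
  have hsum2 : ∀ s, Summable (fun t : ℕ => γ ^ t * w t s) := fun s =>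
    Summable.of_nonneg_of_le (fun t => mul_nonneg (pow_nonneg hγ0 t) ((hwprob t).1 s))
      (fun t => mul_le_of_le_one_right (pow_nonneg hγ0 t) (hwle t s)) hgeo
  have hAa : ∀ s, Summable (fun t : ℕ => γ ^ t * |v t s - w t s|) := fun s =>
    Summable.of_nonneg_of_le (fun t => mul_nonneg (pow_nonneg hγ0 t) (abs_nonneg _))
      (fun t => by
        have habs : |v t s - w t s| ≤ 2 := by
          rw [abs_le]
          constructor <;> [linarith [(hvprob t).1 s, hwle t s]; linarith [hvle t s, (hwprob t).1 s]]
        calc γ ^ t * |v t s - w t s| ≤ γ ^ t * 2 :=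
              mul_le_mul_of_nonneg_left habs (pow_nonneg hγ0 t)
          _ = γ ^ t * 2 := rfl)
      (hgeo.mul_right 2)
  have hDeq : ∀ s, occ π T μ γ s - occ π To μ γ s
      = (1 - γ) * ∑' t : ℕ, γ ^ t * (v t s - w t s) := by
    intro s
    rw [occ, occ, ← mul_sub, ← Summable.tsum_sub (hsum1 s) (hsum2 s)]
    congr 1
    exact tsum_congr fun t => (mul_sub _ _ _).symm
  have hDle : ∀ s, |occ π T μ γ s - occ π To μ γ s|
      ≤ (1 - γ) * ∑' t : ℕ, γ ^ t * |v t s - w t s| := by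
    intro s
    rw [hDeq s, abs_mul, abs_of_nonneg hγ'.le]
    refine mul_le_mul_of_nonneg_left ?_ hγ'.le
    have h := norm_tsum_le_tsum_norm (f := fun t : ℕ => γ ^ t * (v t s - w t s))
      (by simpa [Real.norm_eq_abs, abs_mul, abs_pow, abs_of_nonneg hγ0] using hAa s)
    simpa [Real.norm_eq_abs, abs_mul, abs_pow, abs_of_nonneg hγ0] using h
  have hdb := d_bound hπ0 hπ1 hTo0 hTo1 hμ0 hμ1 hT0 hT1 hTV
  have hR : Summable (fun t : ℕ => γ ^ t * (2 * ε' * t)) :=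
    ((summable_pow_mul_geometric_of_norm_lt_one 1 hγabs).mul_left (2 * ε')).congr
      (fun t => by push_cast; ring)
  have hkey : ∑ p : S × A, |π p.1 p.2 * occ π T μ γ p.1 - π p.1 p.2 * occ π To μ γ p.1|
      = ∑ s, |occ π T μ γ s - occ π To μ γ s| := by
    rw [Fintype.sum_prod_type]
    refine Finset.sum_congr rfl fun s _ => ?_
    have habs : ∀ a, |π s a| = π s a := fun a => abs_of_nonneg (hπ0 s a)
    simp_rw [← mul_sub, abs_mul, habs]
    rw [← Finset.sum_mul, hπ1, one_mul]
  have hchain : ∑ s, |occ π T μ γ s - occ π To μ γ s|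
      ≤ (1 - γ) * (2 * ε' * (γ / (1 - γ) ^ 2)) := by
    calc ∑ s, |occ π T μ γ s - occ π To μ γ s|
        ≤ ∑ s, (1 - γ) * ∑' t : ℕ, γ ^ t * |v t s - w t s| :=
          Finset.sum_le_sum fun s _ => hDle s
      _ = (1 - γ) * ∑' t : ℕ, ∑ s, γ ^ t * |v t s - w t s| := by
          rw [← Finset.mul_sum, ← Summable.tsum_finsetSum (fun s _ => hAa s)]
      _ ≤ (1 - γ) * ∑' t : ℕ, γ ^ t * (2 * ε' * t) := by
          refine mul_le_mul_of_nonneg_left ?_ hγ'.le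
          refine Summable.tsum_le_tsum (fun t => ?_) ?_ hR
          · rw [← Finset.mul_sum]
            exact mul_le_mul_of_nonneg_left (hdb t) (pow_nonneg hγ0 t)
          · refine Summable.of_nonneg_of_le
              (fun t => Finset.sum_nonneg fun s _ =>
                mul_nonneg (pow_nonneg hγ0 t) (abs_nonneg _))
              (fun t => ?_) hR
            rw [← Finset.mul_sum]
            exact mul_le_mul_of_nonneg_left (hdb t) (pow_nonneg hγ0 t)
      _ = (1 - γ) * (2 * ε' * (γ / (1 - γ) ^ 2)) := by
          congr 1
          rw [show (fun t : ℕ => γ ^ t * (2 * ε' * t))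
              = fun t : ℕ => (2 * ε') * ((t : ℝ) * γ ^ t) from funext fun t => by ring]
          rw [tsum_mul_left, tsum_coe_mul_geometric_of_norm_lt_one hγabs]
  rw [hkey]
  have hne : (1 - γ) ≠ 0 := hγ'.ne'
  calc (1/2) * ∑ s, |occ π T μ γ s - occ π To μ γ s|
      ≤ (1/2) * ((1 - γ) * (2 * ε' * (γ / (1 - γ) ^ 2))) := by linarith [hchain]
    _ = γ * ε' / (1 - γ) := by field_simp
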